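/- arXiv:1511.03542 — 2 statements merged into one kernel-verified Lean document; each statement's English description precedes it below -/
import Mathlib

section
/- In type \(C_n\), the set \(\Gamma_{\gamma_i} = \{t_{\ell,m} \mid \ell \in \{i,i+1\},\ m \ge i+1\}\) is a Heisenberg set of centre \(\gamma_i = t_{i,i+1} = \beta_i - \alpha_i\); that is, \(\gamma_i \in \Gamma_{\gamma_i}\) and every \(\alpha \in \Gamma_{\gamma_i} \setminus \{\gamma_i\}\) has a unique \(\alpha' \in \Gamma_{\gamma_i}\) with \(\alpha + \alpha' = \gamma_i\). -/
/-- The standard basis vector `eᵢ` of `ℝ^∞` (1-based indexing). -/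
noncomputable def e (i : ℕ) : ℕ → ℝ := fun m => if m = i then 1 else 0

/-- The simple roots of type `Cₙ`: `αᵢ = eᵢ - eᵢ₊₁` for `i < n` and `αₙ = 2eₙ`. -/
noncomputable def alC (n i : ℕ) : ℕ → ℝ := if i = n then (2 : ℝ) • e n else e i - e (i + 1)

/-- The entry `t_{i,j}` of the shifted tableau `T(Cₙ)`. -/
noncomputable def tC (n i j : ℕ) : ℕ → ℝ :=
  if j ≤ n - 1 then
    (∑ m ∈ Finset.Ico i j, alC n m) + (2 : ℝ) • (∑ m ∈ Finset.Ico j n, alC n m) + alC n n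
  else
    ∑ m ∈ Finset.Icc i (2 * n - j), alC n m

/-- The root system of type `Cₙ`: `±eᵢ ± eⱼ` and `±2eᵢ`. -/
def DeltaC (n : ℕ) : Set (ℕ → ℝ) :=
  {v | ∃ i j, 1 ≤ i ∧ i ≤ n ∧ 1 ≤ j ∧ j ≤ n ∧
    ((i ≠ j ∧ v = e i - e j) ∨ v = e i + e j ∨ v = -e i - e j)}

/-- A subset `Γ` of a root system `Δ` is a Heisenberg set of centre `γ`. -/
def IsHeisenbergSet {V : Type*} [AddCommGroup V] (Δ Γ : Set V) (γ : V) : Prop :=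
  Γ ⊆ Δ ∧ γ ∈ Γ ∧ ∀ α ∈ Γ, α ≠ γ → ∃! α', α' ∈ Γ ∧ α + α' = γ

/-- The set `Γ_{γᵢ} = {t_{ℓ,m} ∣ ℓ ∈ {i, i+1}, m ≥ i+1}`. -/
def GammaC (n i : ℕ) : Set (ℕ → ℝ) :=
  {v | ∃ ℓ m, (ℓ = i ∨ ℓ = i + 1) ∧ ℓ ≤ m ∧ i + 1 ≤ m ∧ m ≤ 2 * n - ℓ ∧ v = tC n ℓ m}

lemma sum_alC (n i j : ℕ) (hij : i ≤ j) (hjn : j ≤ n) :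
    ∑ m ∈ Finset.Ico i j, alC n m = e i - e j := by
  induction j, hij using Nat.le_induction with
  | base => simp
  | succ j hij ih =>
    rw [Finset.sum_Ico_succ_top hij, ih (by omega)]
    have hjn' : j ≠ n := by omega
    rw [alC, if_neg hjn']
    abel

lemma tC_add (n i j : ℕ) (hij : i ≤ j) (hjn : j ≤ n) (hn : 1 ≤ n) :
    tC n i j = e i + e j := by
  rw [tC]
  by_cases h : j ≤ n - 1
  · rw [if_pos h, sum_alC n i j hij hjn, sum_alC n j n (by omega) le_rfl,
      alC, if_pos rfl, smul_sub]
    module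
  · have hjn' : j = n := by omega
    rw [if_neg h, hjn']
    have h3 : 2 * n - n = n := by omega
    rw [h3, ← Finset.Ico_add_one_right_eq_Icc, Finset.sum_Ico_succ_top (by omega : i ≤ n),
      sum_alC n i n (by omega) le_rfl, alC, if_pos rfl]
    module

lemma tC_sub (n i j : ℕ) (hi : 1 ≤ i) (hj : n + 1 ≤ j) (hj2 : j ≤ 2 * n - i) :
    tC n i j = e i - e (2 * n + 1 - j) := by
  rw [tC, if_neg (by omega), ← Finset.Ico_add_one_right_eq_Icc,
    sum_alC n i (2 * n - j + 1) (by omega) (by omega)]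
  have h2 : 2 * n - j + 1 = 2 * n + 1 - j := by omega
  rw [h2]

/-- In type `Cₙ`, the set `Γ_{γᵢ} = {t_{ℓ,m} ∣ ℓ ∈ {i,i+1}, m ≥ i+1}` is a Heisenberg set
of centre `γᵢ = t_{i,i+1} = βᵢ - αᵢ`. -/
theorem GammaC_isHeisenbergSet (n i : ℕ) (hn : 3 ≤ n) (hi : 1 ≤ i) (hin : i ≤ n - 1) :
    tC n i (i + 1) = tC n i i - alC n i ∧
    IsHeisenbergSet (DeltaC n) (GammaC n i) (tC n i (i + 1)) := by
  have hγ : tC n i (i + 1) = e i + e (i + 1) := tC_add n i (i + 1) (by omega) (by omega) (by omega)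
  constructor
  · rw [hγ, tC_add n i i le_rfl (by omega) (by omega), alC, if_neg (by omega)]
    abel
  refine ⟨?_, ⟨i, i + 1, Or.inl rfl, by omega, le_rfl, by omega, rfl⟩, ?_⟩
  · -- Γ ⊆ Δ
    rintro v ⟨ℓ, m, hℓ, hℓm, him, hm2, rfl⟩
    have hℓ1 : 1 ≤ ℓ := by rcases hℓ with rfl | rfl <;> omega
    have hℓn : ℓ ≤ n := by rcases hℓ with rfl | rfl <;> omega
    by_cases hmn : m ≤ n
    · exact ⟨ℓ, m, hℓ1, hℓn, by omega, hmn,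
        Or.inr (Or.inl (tC_add n ℓ m hℓm hmn (by omega)))⟩
    · refine ⟨ℓ, 2 * n + 1 - m, hℓ1, hℓn, by omega, by omega,
        Or.inl ⟨by omega, tC_sub n ℓ m hℓ1 (by omega) hm2⟩⟩
  · -- Heisenberg property
    rintro v ⟨ℓ, m, hℓ, hℓm, him, hm2, rfl⟩ hne
    have key : tC n i (i + 1) - tC n ℓ m ∈ GammaC n i := by
      rcases hℓ with h | h <;> rw [h] at hℓm hm2 hne ⊢
      · by_cases hmn : m ≤ n
        · -- row i, m ≤ n : e i + e m ; m ≠ i+1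
          have hm1 : i + 2 ≤ m := by
            by_cases hm : m = i + 1
            · exact absurd (by rw [hm]) hne
            · omega
          refine ⟨i + 1, 2 * n + 1 - m, Or.inr rfl, by omega, by omega, by omega, ?_⟩
          rw [hγ, tC_add n i m hℓm hmn (by omega),
            tC_sub n (i + 1) (2 * n + 1 - m) (by omega) (by omega) (by omega)]
          have : 2 * n + 1 - (2 * n + 1 - m) = m := by omega
          rw [this]; abel
        · -- row i, m > n : e i - e k, k = 2n+1-m ∈ [i+1, n]
          refine ⟨i + 1, 2 * n + 1 - m, Or.inr rfl, by omega, by omega, by omega, ?_⟩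
          rw [hγ, tC_sub n i m hi (by omega) hm2,
            tC_add n (i + 1) (2 * n + 1 - m) (by omega) (by omega) (by omega)]
          abel
      · by_cases hmn : m ≤ n
        · -- row i+1, m ≤ n : e(i+1) + e m ; partner e i - e m = tC n i (2n+1-m)
          refine ⟨i, 2 * n + 1 - m, Or.inl rfl, by omega, by omega, by omega, ?_⟩
          rw [hγ, tC_add n (i + 1) m hℓm hmn (by omega),
            tC_sub n i (2 * n + 1 - m) hi (by omega) (by omega)]
          have : 2 * n + 1 - (2 * n + 1 - m) = m := by omega
          rw [this]; abel
        · -- row i+1, m > n : e(i+1) - e k, k ∈ [i+2, n]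
          refine ⟨i, 2 * n + 1 - m, Or.inl rfl, by omega, by omega, by omega, ?_⟩
          rw [hγ, tC_sub n (i + 1) m (by omega) (by omega) hm2,
            tC_add n i (2 * n + 1 - m) (by omega) (by omega) (by omega)]
          abel
    refine ⟨tC n i (i + 1) - tC n ℓ m, ⟨key, by abel⟩, ?_⟩
    rintro y ⟨-, hy⟩
    rw [← hy]; abel
end

section
/- In a simple root system \(\Delta\), the roots of the Kostant cascade \(\{\beta_K\}_{K \in \mathcal{K}}\) are pairwise strongly orthogonal: for distinct \(K, L\), neither \(\beta_K + \beta_L\) nor \(\beta_K - \beta_L\) is a root. -/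
def RootConnected {V : Type*} (ip : V → V → ℝ) (S : Set V) (a b : V) : Prop :=
  a ∈ S ∧ b ∈ S ∧ Relation.ReflTransGen (fun x y => x ∈ S ∧ y ∈ S ∧ ip x y ≠ 0) a b

def IsHighestRootOfComponent {V : Type*} [AddCommGroup V] (ip : V → V → ℝ)
    (P S : Set V) (β : V) : Prop :=
  β ∈ S ∧ β ∈ P ∧ ∀ α ∈ S, α ∈ P → RootConnected ip S α β → β + α ∉ S

inductive InCascade {V : Type*} [AddCommGroup V] (ip : V → V → ℝ) (P : Set V) :
    Set V → V → Prop where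
  | highest (S : Set V) (β : V) : IsHighestRootOfComponent ip P S β → InCascade ip P S β
  | step (S : Set V) (β' β : V) : IsHighestRootOfComponent ip P S β' →
      InCascade ip P {α | α ∈ S ∧ RootConnected ip S α β' ∧ ip α β' = 0} β →
      InCascade ip P S β

open scoped RealInnerProductSpace

namespace CascadeAux

/-- chains of given length -/
inductive Chn {V : Type*} (r : V → V → Prop) : ℕ → V → V → Prop
  | refl (a : V) : Chn r 0 a a
  | cons {n : ℕ} {a b c : V} : r a b → Chn r n b c → Chn r (n+1) a c

theorem Chn.snoc {V : Type*} {r : V → V → Prop} {n a b c} (h : Chn r n a b) (hbc : r b c) :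
    Chn r (n+1) a c := by
  induction h with
  | refl a => exact .cons hbc (.refl c)
  | cons hab h ih => exact .cons hab (ih hbc)

theorem exists_chn {V : Type*} {r : V → V → Prop} {a b} (h : Relation.ReflTransGen r a b) :
    ∃ n, Chn r n a b := by
  induction h with
  | refl => exact ⟨0, .refl a⟩
  | tail h hbc ih => exact ⟨ih.choose + 1, ih.choose_spec.snoc hbc⟩

variable {V : Type*} [NormedAddCommGroup V] [InnerProductSpace ℝ V]

local notation "ip" => fun x y : V => (inner ℝ x y : ℝ)

theorem conn_symm {S : Set V} {a b : V} (h : RootConnected ip S a b) :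
    RootConnected ip S b a := by
  refine ⟨h.2.1, h.1, Std.Symm.symm (self := @Relation.ReflTransGen.stdSymm _ _ ⟨?_⟩) _ _ h.2.2⟩
  rintro x y ⟨hx, hy, hxy⟩
  refine ⟨hy, hx, ?_⟩
  show (inner ℝ y x : ℝ) ≠ 0
  rw [real_inner_comm]
  exact hxy

theorem conn_trans {S : Set V} {a b c : V} (h : RootConnected ip S a b)
    (h' : RootConnected ip S b c) : RootConnected ip S a c :=
  ⟨h.1, h'.2.1, h.2.2.trans h'.2.2⟩

theorem conn_single {S : Set V} {a b : V} (ha : a ∈ S) (hb : b ∈ S) (h : ⟪a, b⟫ ≠ 0) :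
    RootConnected ip S a b :=
  ⟨ha, hb, Relation.ReflTransGen.single ⟨ha, hb, h⟩⟩

theorem conn_head {S : Set V} {a b c : V} (ha : a ∈ S) (h : ⟪a, b⟫ ≠ 0)
    (hbc : RootConnected ip S b c) : RootConnected ip S a c :=
  conn_trans (conn_single ha hbc.1 h) hbc

variable {Δ P : Set V}

section Roots
variable (h0 : (0 : V) ∉ Δ) (hneg : ∀ α ∈ Δ, -α ∈ Δ)
  (hrefl : ∀ α ∈ Δ, ∀ β ∈ Δ, β - (2 * ⟪β, α⟫ / ⟪α, α⟫) • α ∈ Δ)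
  (hcrys : ∀ α ∈ Δ, ∀ β ∈ Δ, ∃ m : ℤ, 2 * ⟪β, α⟫ / ⟪α, α⟫ = (m : ℝ))

include h0 in
theorem ipos {α : V} (hα : α ∈ Δ) : 0 < ⟪α, α⟫ := by
  rcases lt_or_eq_of_le (real_inner_self_nonneg (x := α)) with h | h
  · exact h
  · exact absurd hα (by rw [← inner_self_eq_zero.mp h.symm] at h0; exact h0)

include h0 hneg hrefl hcrys in
theorem root_sub {α β : V} (hα : α ∈ Δ) (hβ : β ∈ Δ) (hc : 0 < ⟪α, β⟫) :
    α = β ∨ α - β ∈ Δ := by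
  have ha : 0 < ⟪α, α⟫ := ipos h0 hα
  have hb : 0 < ⟪β, β⟫ := ipos h0 hβ
  obtain ⟨n, hn0⟩ := hcrys α hα β hβ
  obtain ⟨m, hm0⟩ := hcrys β hβ α hα
  have hn : 2 * ⟪α, β⟫ / ⟪α, α⟫ = (n : ℝ) := by rw [real_inner_comm]; exact hn0
  have hm : 2 * ⟪α, β⟫ / ⟪β, β⟫ = (m : ℝ) := hm0
  have hn1 : (1 : ℤ) ≤ n := by
    have : (0 : ℝ) < n := hn ▸ by positivity
    exact_mod_cast this
  have hm1 : (1 : ℤ) ≤ m := by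
    have : (0 : ℝ) < m := hm ▸ by positivity
    exact_mod_cast this
  by_cases hmm : m = 1
  · right
    have := hrefl β hβ α hα
    rw [hm0, hmm] at this
    simpa using this
  by_cases hnn : n = 1
  · right
    have := hrefl α hα β hβ
    rw [hn0, hnn] at this
    have h2 : β - α ∈ Δ := by simpa using this
    have := hneg _ h2
    simpa using this
  -- now m ≥ 2, n ≥ 2
  have hm2 : (2 : ℤ) ≤ m := by omega
  have hn2 : (2 : ℤ) ≤ n := by omega
  have hcs : ⟪α, β⟫ * ⟪α, β⟫ ≤ ⟪α, α⟫ * ⟪β, β⟫ := real_inner_mul_inner_self_le α β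
  have hab : (0 : ℝ) < ⟪α, α⟫ * ⟪β, β⟫ := mul_pos ha hb
  have hprod : (n : ℝ) * m ≤ 4 := by
    rw [← hn, ← hm, div_mul_div_comm, div_le_iff₀ hab]
    nlinarith
  have hprod4 : (4 : ℝ) ≤ (n : ℝ) * m := by
    have : (4 : ℤ) ≤ n * m := by nlinarith
    exact_mod_cast this
  have h4 : n * m = 4 := by
    have h4r : (n : ℝ) * m = 4 := le_antisymm hprod hprod4
    exact_mod_cast h4r
  have hnval : n = 2 := by nlinarith
  have heq : ⟪α, β⟫ * ⟪α, β⟫ = ⟪α, α⟫ * ⟪β, β⟫ := by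
    have h4r : (n : ℝ) * m = 4 := le_antisymm hprod hprod4
    rw [← hn, ← hm, div_mul_div_comm, div_eq_iff (ne_of_gt hab)] at h4r
    nlinarith
  have hca : ⟪α, β⟫ = ⟪α, α⟫ := by
    have h2 : 2 * ⟪α, β⟫ / ⟪α, α⟫ = 2 := by rw [hn, hnval]; norm_num
    rw [div_eq_iff (ne_of_gt ha)] at h2
    linarith
  have hw : ⟪α, α⟫ • β - ⟪α, β⟫ • α = 0 := by
    have : ⟪⟪α, α⟫ • β - ⟪α, β⟫ • α, ⟪α, α⟫ • β - ⟪α, β⟫ • α⟫ = 0 := by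
      simp only [inner_sub_left, inner_sub_right, real_inner_smul_left, real_inner_smul_right]
      rw [real_inner_comm α β]
      nlinarith [heq, ha, hb]
    exact inner_self_eq_zero.mp this
  left
  have : ⟪α, α⟫ • β = ⟪α, α⟫ • α := by
    rw [sub_eq_zero] at hw
    rw [hw, hca]
  exact (smul_right_injective V (ne_of_gt ha) this).symm

include h0 hneg hrefl hcrys in
theorem root_add {α β : V} (hα : α ∈ Δ) (hβ : β ∈ Δ) (hc : ⟪α, β⟫ < 0) :
    α = -β ∨ α + β ∈ Δ := by
  have := root_sub h0 hneg hrefl hcrys hα (hneg β hβ)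
    (by rw [inner_neg_right]; linarith)
  rcases this with h | h
  · exact Or.inl h
  · right; rw [sub_neg_eq_add] at h; exact h

end Roots

/-- The closure invariant for subsystems. -/
def SClosed (Δ S : Set V) : Prop :=
  S ⊆ Δ ∧ (∀ α ∈ S, -α ∈ S) ∧ ∀ α ∈ S, ∀ δ ∈ S, α + δ ∈ Δ → α + δ ∈ S

section Main

variable (hfin : Δ.Finite) (h0 : (0 : V) ∉ Δ)
  (hneg : ∀ α ∈ Δ, -α ∈ Δ)
  (hrefl : ∀ α ∈ Δ, ∀ β ∈ Δ, β - (2 * ⟪β, α⟫ / ⟪α, α⟫) • α ∈ Δ)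
  (hcrys : ∀ α ∈ Δ, ∀ β ∈ Δ, ∃ m : ℤ, 2 * ⟪β, α⟫ / ⟪α, α⟫ = (m : ℝ))
  (hPsub : P ⊆ Δ)
  (hPpart : ∀ α ∈ Δ, (α ∈ P ↔ -α ∉ P))

include hPpart in
theorem mem_P_of_not {α : V} (hα : α ∈ Δ) (h : α ∉ P) : -α ∈ P := by
  by_contra h'
  exact h ((hPpart α hα).mpr h')

include h0 in
/-- Case A : two non-connected roots of a closed subsystem are strongly orthogonal. -/
theorem caseA {S : Set V} (hS : SClosed Δ S) {β γ : V} (hβ : β ∈ S) (hγ : γ ∈ S)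
    (hnc : ¬ RootConnected ip S β γ) : β + γ ∉ Δ ∧ β - γ ∉ Δ := by
  have hβΔ := hS.1 hβ
  have hγΔ := hS.1 hγ
  have horth : ⟪β, γ⟫ = 0 := by
    by_contra h
    exact hnc (conn_single hβ hγ h)
  have hbb : ⟪β, β⟫ ≠ 0 := ne_of_gt (ipos h0 hβΔ)
  have hgg : ⟪γ, γ⟫ ≠ 0 := ne_of_gt (ipos h0 hγΔ)
  constructor
  · intro hmem
    have hmemS : β + γ ∈ S := hS.2.2 β hβ γ hγ hmem
    refine hnc (conn_trans (conn_single hβ hmemS ?_) (conn_single hmemS hγ ?_))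
    · rw [inner_add_right, horth]; simpa using hbb
    · rw [inner_add_left, horth]; simpa using hgg
  · intro hmem
    have hmemS : β - γ ∈ S := by
      have := hS.2.2 β hβ (-γ) (hS.2.1 γ hγ) (by rwa [← sub_eq_add_neg])
      rwa [← sub_eq_add_neg] at this
    refine hnc (conn_trans (conn_single hβ hmemS ?_) (conn_single hmemS hγ ?_))
    · rw [inner_sub_right, horth]; simpa using hbb
    · rw [inner_sub_left, horth]; simpa using hgg

include h0 hneg hrefl hcrys hPsub hPpart in
/-- Dominance: a maximal root pairs non-negatively with positive connected roots. -/
theorem dominance {S : Set V} (hS : SClosed Δ S) {θ : V}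
    (hθ : IsHighestRootOfComponent ip P S θ) {α : V} (hα : α ∈ S) (hαP : α ∈ P)
    (hc : RootConnected ip S α θ) : 0 ≤ ⟪θ, α⟫ := by
  by_contra hlt
  push_neg at hlt
  have hαΔ := hS.1 hα
  have hθΔ := hS.1 hθ.1
  rcases root_add h0 hneg hrefl hcrys hθΔ hαΔ hlt with h | h
  · have : -θ ∈ P := h ▸ (by simpa using hαP)
    exact (hPpart θ hθΔ).mp hθ.2.1 this
  · exact hθ.2.2 α hα hαP hc (hS.2.2 θ hθ.1 α hα h)

include h0 hneg hrefl hcrys hPsub hPpart in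
/-- If `θ` is maximal, `x` positive connected with `⟪θ,x⟫ > 0`, `x ≠ θ`,
then `θ - x` is a positive root of `S`. -/
theorem sub_mem {S : Set V} (hS : SClosed Δ S) {θ : V}
    (hθ : IsHighestRootOfComponent ip P S θ) {x : V} (hx : x ∈ S) (hxP : x ∈ P)
    (hc : RootConnected ip S x θ) (hne : x ≠ θ) (hpos : 0 < ⟪θ, x⟫) :
    θ - x ∈ Δ ∧ θ - x ∈ S ∧ θ - x ∈ P := by
  have hxΔ := hS.1 hx
  have hθΔ := hS.1 hθ.1
  have hΔ : θ - x ∈ Δ := by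
    rcases root_sub h0 hneg hrefl hcrys hθΔ hxΔ hpos with h | h
    · exact absurd h.symm hne
    · exact h
  have hmemS : θ - x ∈ S := by
    have := hS.2.2 θ hθ.1 (-x) (hS.2.1 x hx) (by rwa [← sub_eq_add_neg])
    rwa [← sub_eq_add_neg] at this
  refine ⟨hΔ, hmemS, ?_⟩
  by_contra hnP
  have hxm : x - θ ∈ P := by
    have := mem_P_of_not hPpart hΔ hnP
    rwa [neg_sub] at this
  have hxmS : x - θ ∈ S := by
    have := hS.2.1 _ hmemS; rwa [neg_sub] at this
  have hconn : RootConnected ip S (x - θ) θ := by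
    by_cases h : ⟪x - θ, θ⟫ = 0
    · refine conn_head hxmS (b := x) ?_ hc
      have hkey : (⟪x - θ, x⟫ : ℝ) = ⟪x - θ, x - θ⟫ := by
        have h2 : (⟪x - θ, x - θ⟫ : ℝ) = ⟪x - θ, x⟫ - ⟪x - θ, θ⟫ := inner_sub_right _ _ _
        rw [h2, h, sub_zero]
      rw [hkey]
      exact fun hz => hne (by simpa [sub_eq_zero] using inner_self_eq_zero.mp hz)
    · exact conn_single hxmS hθ.1 h
  have hfin2 := hθ.2.2 (x - θ) hxmS hxm hconn
  have heq2 : θ + (x - θ) = x := by abel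
  rw [heq2] at hfin2
  exact hfin2 hx

include h0 hneg hrefl hcrys hPsub hPpart in
/-- Uniqueness of the maximal root of a connected component. -/
theorem unique_max {S : Set V} (hS : SClosed Δ S) {θ θ' : V}
    (hθ : IsHighestRootOfComponent ip P S θ) (hθ' : IsHighestRootOfComponent ip P S θ')
    (hc : RootConnected ip S θ θ') : θ = θ' := by
  by_contra hne
  have hθΔ := hS.1 hθ.1
  have hθ'Δ := hS.1 hθ'.1
  -- step 1 : orthogonality
  have horth : ⟪θ, θ'⟫ = 0 := by
    have h1 : 0 ≤ ⟪θ, θ'⟫ := dominance h0 hneg hrefl hcrys hPsub hPpart hS hθ hθ'.1 hθ'.2.1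
      (conn_symm hc)
    rcases lt_or_eq_of_le h1 with hpos | h
    · exfalso
      obtain ⟨huΔ, huS, huP⟩ := sub_mem h0 hneg hrefl hcrys hPsub hPpart hS hθ hθ'.1 hθ'.2.1
        (conn_symm hc) (Ne.symm hne) hpos
      have hconn : RootConnected ip S (θ - θ') θ' := by
        by_cases h : ⟪θ - θ', θ'⟫ = 0
        · refine conn_head huS (b := θ) ?_ hc
          have hkey : (⟪θ - θ', θ⟫ : ℝ) = ⟪θ - θ', θ - θ'⟫ := by
            have h2 : (⟪θ - θ', θ - θ'⟫ : ℝ) = ⟪θ - θ', θ⟫ - ⟪θ - θ', θ'⟫ := inner_sub_right _ _ _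
            rw [h2, h, sub_zero]
          rw [hkey]
          exact fun hz => hne (by simpa [sub_eq_zero] using inner_self_eq_zero.mp hz)
        · exact conn_single huS hθ'.1 h
      have hfin2 := hθ'.2.2 (θ - θ') huS huP hconn
      have heq2 : θ' + (θ - θ') = θ := by abel
      rw [heq2] at hfin2
      exact hfin2 hθ.1
    · exact h.symm
  -- step 2 : chains
  have key : ∀ n : ℕ,
      ¬ Chn (fun x y => x ∈ S ∧ y ∈ S ∧ (inner ℝ x y : ℝ) ≠ 0) n θ θ' := by
    intro n
    induction n using Nat.strong_induction_on with
    | _ n IH =>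
    intro hn
    cases hn with
    | refl => exact hne rfl
    | @cons n1 _ x _ e1 t1 =>
      cases t1 with
      | refl => exact e1.2.2 horth
      | @cons n2 _ y _ e2 t2 =>
        cases t2 with
        | refl =>
          -- chain θ — x — θ'
          obtain ⟨hθS, hxS, hθx⟩ := e1
          obtain ⟨-, hθ'S, hxθ'⟩ := e2
          have hxΔ := hS.1 hxS
          obtain ⟨x', hx'S, hx'P, hθx', hxθ'2⟩ :
              ∃ x', x' ∈ S ∧ x' ∈ P ∧ (⟪θ, x'⟫ : ℝ) ≠ 0 ∧ (⟪x', θ'⟫ : ℝ) ≠ 0 := by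
            by_cases hxP : x ∈ P
            · exact ⟨x, hxS, hxP, hθx, hxθ'⟩
            · refine ⟨-x, hS.2.1 x hxS, mem_P_of_not hPpart hxΔ hxP, ?_, ?_⟩
              · rw [inner_neg_right]
                simpa using hθx
              · rw [inner_neg_left]; simpa using hxθ'
          have hd1 : 0 < ⟪θ, x'⟫ :=
            lt_of_le_of_ne (dominance h0 hneg hrefl hcrys hPsub hPpart hS hθ hx'S hx'P
              (conn_single hx'S hθ.1 (by rw [real_inner_comm]; exact hθx'))) (Ne.symm hθx')
          have hθ'x' : (⟪θ', x'⟫ : ℝ) ≠ 0 := by rw [real_inner_comm]; exact hxθ'2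
          have hd2 : 0 < ⟪θ', x'⟫ :=
            lt_of_le_of_ne (dominance h0 hneg hrefl hcrys hPsub hPpart hS hθ' hx'S hx'P
              (conn_single hx'S hθ'.1 hxθ'2)) (Ne.symm hθ'x')
          have hx'ne : x' ≠ θ' := by
            rintro rfl
            exact hθx' horth
          obtain ⟨hvΔ, hvS, hvP⟩ := sub_mem h0 hneg hrefl hcrys hPsub hPpart hS hθ' hx'S hx'P
            (conn_single hx'S hθ'.1 hxθ'2) hx'ne hd2
          have hneg2 : (⟪θ, θ' - x'⟫ : ℝ) < 0 := by
            rw [inner_sub_right, horth]; linarith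
          have := dominance h0 hneg hrefl hcrys hPsub hPpart hS hθ hvS hvP
            (conn_single hvS hθ.1 (by rw [real_inner_comm]; exact ne_of_lt hneg2))
          linarith
        | @cons n3 _ z _ e3 t3 =>
          obtain ⟨hθS, hxS, hθx⟩ := e1
          obtain ⟨-, hyS, hxy⟩ := e2
          have hzS : z ∈ S := e3.2.1
          have hyz : (⟪y, z⟫ : ℝ) ≠ 0 := e3.2.2
          by_cases hθy : (⟪θ, y⟫ : ℝ) ≠ 0
          · exact IH (n3 + 2) (by omega) (Chn.cons ⟨hθS, hyS, hθy⟩ (Chn.cons e3 t3))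
          by_cases hxz : (⟪x, z⟫ : ℝ) ≠ 0
          · exact IH (n3 + 2) (by omega)
              (Chn.cons ⟨hθS, hxS, hθx⟩ (Chn.cons ⟨hxS, hzS, hxz⟩ t3))
          push_neg at hθy hxz
          have hxΔ := hS.1 hxS
          have hyΔ := hS.1 hyS
          obtain ⟨w, hwS, hθw, hwz⟩ :
              ∃ w, w ∈ S ∧ (⟪θ, w⟫ : ℝ) ≠ 0 ∧ (⟪w, z⟫ : ℝ) ≠ 0 := by
            rcases lt_trichotomy (⟪x, y⟫ : ℝ) 0 with hlt | heq | hgt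
            · have hxny : x ≠ -y := by
                rintro rfl
                apply hθx
                rw [inner_neg_right, hθy, neg_zero]
              rcases root_add h0 hneg hrefl hcrys hxΔ hyΔ hlt with h | h
              · exact absurd h hxny
              · refine ⟨x + y, hS.2.2 x hxS y hyS h, ?_, ?_⟩
                · rw [inner_add_right, hθy, add_zero]; exact hθx
                · rw [inner_add_left, hxz, zero_add]; exact hyz
            · exact absurd heq hxy
            · have hxey : x ≠ y := by
                rintro rfl
                exact hθx hθy
              rcases root_sub h0 hneg hrefl hcrys hxΔ hyΔ hgt with h | h
              · exact absurd h hxey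
              · refine ⟨x - y, ?_, ?_, ?_⟩
                · have := hS.2.2 x hxS (-y) (hS.2.1 y hyS) (by rwa [← sub_eq_add_neg])
                  rwa [← sub_eq_add_neg] at this
                · rw [inner_sub_right, hθy, sub_zero]; exact hθx
                · rw [inner_sub_left, hxz, zero_sub]; simpa using hyz
          exact IH (n3 + 2) (by omega)
            (Chn.cons ⟨hθS, hwS, hθw⟩ (Chn.cons ⟨hwS, hzS, hwz⟩ t3))
  obtain ⟨n, hn⟩ := exists_chn hc.2.2
  exact key n hn

theorem cascade_mem {S : Set V} {γ : V} (h : InCascade ip P S γ) : γ ∈ S ∧ γ ∈ P := by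
  induction h with
  | highest S β hβ => exact ⟨hβ.1, hβ.2.1⟩
  | step S β' β hβ' hsub ih => exact ⟨ih.1.1, ih.2⟩

include h0 in
theorem sclosed_step {S : Set V} (hS : SClosed Δ S) {b : V} :
    SClosed Δ {α | α ∈ S ∧ RootConnected ip S α b ∧ ip α b = 0} := by
  refine ⟨fun α hα => hS.1 hα.1, ?_, ?_⟩
  · rintro α ⟨hαS, hαc, hα0⟩
    refine ⟨hS.2.1 α hαS, ?_, ?_⟩
    · refine conn_head (hS.2.1 α hαS) (b := α) ?_ hαc
      rw [inner_neg_left]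
      exact neg_ne_zero.mpr (ne_of_gt (ipos h0 (hS.1 hαS)))
    · show (⟪-α, b⟫ : ℝ) = 0
      rw [inner_neg_left]
      simpa using hα0
  · rintro α ⟨hαS, hαc, hα0⟩ δ ⟨hδS, hδc, hδ0⟩ hsum
    have hsumS : α + δ ∈ S := hS.2.2 α hαS δ hδS hsum
    refine ⟨hsumS, ?_, ?_⟩
    · by_cases h : ⟪α + δ, α⟫ = 0
      · refine conn_head hsumS (b := δ) ?_ hδc
        intro h'
        have : ⟪α + δ, α + δ⟫ = 0 := by
          rw [inner_add_right (𝕜 := ℝ) (x := α + δ) (y := α) (z := δ), h, h', add_zero]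
        exact (ne_of_gt (ipos h0 hsum)) this
      · exact conn_head hsumS h hαc
    · show (⟪α + δ, b⟫ : ℝ) = 0
      rw [inner_add_left]
      have h1 : (⟪α, b⟫ : ℝ) = 0 := hα0
      have h2 : (⟪δ, b⟫ : ℝ) = 0 := hδ0
      rw [h1, h2, add_zero]

include h0 hneg hrefl hcrys hPsub hPpart in
/-- Case B : a maximal root versus a cascade root of its orthogonal subsystem. -/
theorem caseB {S : Set V} (hS : SClosed Δ S) {b γ : V}
    (hb : IsHighestRootOfComponent ip P S b)
    (hγS : γ ∈ S) (hγc : RootConnected ip S γ b) (hγ0 : (⟪γ, b⟫ : ℝ) = 0) (hγP : γ ∈ P) :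
    b + γ ∉ Δ ∧ b - γ ∉ Δ := by
  have hγΔ := hS.1 hγS
  have hsum : b + γ ∉ Δ := fun h => hb.2.2 γ hγS hγP hγc (hS.2.2 b hb.1 γ hγS h)
  refine ⟨hsum, fun h => hsum ?_⟩
  have hmem := hrefl γ hγΔ (b - γ) h
  have hco : 2 * (⟪b - γ, γ⟫ : ℝ) / ⟪γ, γ⟫ = -2 := by
    have hbγ : (⟪b, γ⟫ : ℝ) = 0 := by rw [real_inner_comm]; exact hγ0
    rw [inner_sub_left, hbγ, zero_sub]
    have hγγ : (⟪γ, γ⟫ : ℝ) ≠ 0 := ne_of_gt (ipos h0 hγΔ)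
    field_simp
  rw [hco] at hmem
  have heqv : b - γ - (-2 : ℝ) • γ = b + γ := by
    rw [neg_smul, sub_neg_eq_add, two_smul]
    abel
  rwa [heqv] at hmem

include h0 hneg hrefl hcrys hPsub hPpart in
/-- The highest-vs-cascade case. -/
theorem highest_case {S : Set V} (hS : SClosed Δ S) {β γ : V}
    (hβ : IsHighestRootOfComponent ip P S β) (hγ : InCascade ip P S γ) (hne : β ≠ γ) :
    β + γ ∉ Δ ∧ β - γ ∉ Δ := by
  cases hγ with
  | highest S γ hγ' =>
    by_cases hc : RootConnected ip S β γ
    · exact absurd (unique_max h0 hneg hrefl hcrys hPsub hPpart hS hβ hγ' hc) hne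
    · exact caseA h0 hS hβ.1 hγ'.1 hc
  | step S b γ hb hsub =>
    obtain ⟨⟨hγS, hγc, hγ0⟩, hγP⟩ := cascade_mem hsub
    by_cases hc : RootConnected ip S β b
    · have := unique_max h0 hneg hrefl hcrys hPsub hPpart hS hβ hb hc
      subst this
      exact caseB h0 hneg hrefl hcrys hPsub hPpart hS hβ hγS hγc hγ0 hγP
    · refine caseA h0 hS hβ.1 hγS fun hcon => hc (conn_trans hcon hγc)

include hfin h0 hneg hrefl hcrys hPsub hPpart in
theorem main : ∀ n : ℕ, ∀ S : Set V, SClosed Δ S → S.ncard ≤ n →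
    ∀ β γ : V, InCascade ip P S β → InCascade ip P S γ → β ≠ γ →
    β + γ ∉ Δ ∧ β - γ ∉ Δ := by
  intro n
  induction n using Nat.strong_induction_on with
  | _ n IH =>
  intro S hS hcard β γ hβ hγ hne
  cases hβ with
  | highest S β hβ' => exact highest_case h0 hneg hrefl hcrys hPsub hPpart hS hβ' hγ hne
  | step S a β ha hsubβ =>
    cases hγ with
    | highest S γ hγ' =>
      have := highest_case h0 hneg hrefl hcrys hPsub hPpart hS hγ'
        (InCascade.step S a β ha hsubβ) (Ne.symm hne)
      constructor
      · rw [add_comm]; exact this.1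
      · intro h
        refine this.2 ?_
        have h2 := hneg _ h
        rwa [neg_sub] at h2
    | step S b γ hb hsubγ =>
      obtain ⟨⟨hβS, hβc, hβ0⟩, hβP⟩ := cascade_mem hsubβ
      obtain ⟨⟨hγS, hγc, hγ0⟩, hγP⟩ := cascade_mem hsubγ
      by_cases hc : RootConnected ip S a b
      · have heq := unique_max h0 hneg hrefl hcrys hPsub hPpart hS ha hb hc
        subst heq
        -- recurse in the smaller subsystem
        set T : Set V := {α | α ∈ S ∧ RootConnected ip S α a ∧ ip α a = 0} with hT
        have hTsub : T ⊆ S := fun α hα => hα.1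
        have hTS : T ⊂ S := by
          refine ssubset_of_subset_of_ne hTsub fun h => ?_
          have : a ∈ T := h ▸ ha.1
          exact (ne_of_gt (ipos h0 (hS.1 ha.1))) this.2.2
        have hSfin : S.Finite := hfin.subset hS.1
        have hlt : T.ncard < n := lt_of_lt_of_le (Set.ncard_lt_ncard hTS hSfin) hcard
        exact IH T.ncard hlt T (sclosed_step h0 hS) le_rfl β γ hsubβ hsubγ hne
      · refine caseA h0 hS hβS hγS fun hcon => ?_
        exact hc (conn_trans (conn_symm hβc) (conn_trans hcon hγc))

end Main
end CascadeAux

open scoped RealInnerProductSpace in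
/-- In an irreducible root system `Δ`, the roots of the Kostant cascade are pairwise
strongly orthogonal: for distinct cascade roots `β, γ`, neither `β + γ` nor `β - γ`
is a root. -/
theorem cascade_strongly_orthogonal {V : Type*} [NormedAddCommGroup V]
    [InnerProductSpace ℝ V] (Δ P : Set V)
    (hfin : Δ.Finite) (h0 : (0 : V) ∉ Δ)
    (hneg : ∀ α ∈ Δ, -α ∈ Δ)
    (hrefl : ∀ α ∈ Δ, ∀ β ∈ Δ, β - (2 * ⟪β, α⟫ / ⟪α, α⟫) • α ∈ Δ)
    (hcrys : ∀ α ∈ Δ, ∀ β ∈ Δ, ∃ m : ℤ, 2 * ⟪β, α⟫ / ⟪α, α⟫ = (m : ℝ))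
    (hirr : ∀ α ∈ Δ, ∀ β ∈ Δ, RootConnected (fun x y => ⟪x, y⟫) Δ α β)
    (hPsub : P ⊆ Δ)
    (hPpart : ∀ α ∈ Δ, (α ∈ P ↔ -α ∉ P))
    (hPadd : ∀ α ∈ P, ∀ β ∈ P, α + β ∈ Δ → α + β ∈ P)
    (β γ : V)
    (hβ : InCascade (fun x y => ⟪x, y⟫) P Δ β)
    (hγ : InCascade (fun x y => ⟪x, y⟫) P Δ γ)
    (hne : β ≠ γ) :
    β + γ ∉ Δ ∧ β - γ ∉ Δ := by
  exact CascadeAux.main hfin h0 hneg hrefl hcrys hPsub hPpart Δ.ncard Δ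
    ⟨le_refl Δ, hneg, fun α _ δ _ h => h⟩ le_rfl β γ hβ hγ hne
end
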